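/- arXiv:2602.09559 — 7 statements merged into one kernel-verified Lean document; each statement's English description precedes it below -/
import Mathlib

section
/- Let R be an associative (not necessarily unital) algebra over a commutative ring F and let (σ,s) be a homothetic datum on R, i.e. σ = (⃖σ, ⃗σ) is a double homothetism and s ∈ R satisfies σs = sσ and σ² = σ + s̄ (where s̄ is the inner bimultiplication by s). Then the F-module R ⊕ F with multiplication (a,ξ)(b,ζ) = (ab + ζ(aσ) + ξ(σb) + ξζs, ξζ) is an associative algebra. -/
/-- The multiplication on the homothetic extension `R(σ,s) = R ⊕ F`:
`(a,ξ)(b,ζ) = (ab + ζ(aσ) + ξ(σb) + ξζ s, ξζ)`, where `l a = aσ` and `r b = σb`. -/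
def homMul {F R : Type*} [CommRing F] [NonUnitalRing R] [Module F R]
    (l r : R → R) (s : R) (x y : R × F) : R × F :=
  (x.1 * y.1 + y.2 • l x.1 + x.2 • r y.1 + (x.2 * y.2) • s, x.2 * y.2)

/-- for a homothetic datum `(σ,s)` on an associative (not necessarily
unital) `F`-algebra `R`, the `F`-module `R ⊕ F` with the multiplication
`(a,ξ)(b,ζ) = (ab + ζ(aσ) + ξ(σb) + ξζ s, ξζ)` is an associative `F`-algebra. -/
theorem homothetic_extension_is_associative_algebra
    {F R : Type*} [CommRing F] [NonUnitalRing R] [Module F R]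
    [SMulCommClass F R R] [IsScalarTower F R R]
    (l r : R → R) (s : R)
    (hladd : ∀ a b, l (a + b) = l a + l b)
    (hlsmul : ∀ (c : F) a, l (c • a) = c • l a)
    (hradd : ∀ a b, r (a + b) = r a + r b)
    (hrsmul : ∀ (c : F) a, r (c • a) = c • r a)
    (hbm1 : ∀ a b, r (a * b) = r a * b)
    (hbm2 : ∀ a b, l (a * b) = a * l b)
    (hbm3 : ∀ a b, a * r b = l a * b)
    (hdh : ∀ a, r (l a) = l (r a))
    (hs : r s = l s)
    (hsq1 : ∀ a, r (r a) = r a + s * a)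
    (hsq2 : ∀ a, l (l a) = l a + a * s) :
    (∀ x y z : R × F, homMul l r s (homMul l r s x y) z = homMul l r s x (homMul l r s y z)) ∧
    (∀ x y z : R × F, homMul l r s x (y + z) = homMul l r s x y + homMul l r s x z) ∧
    (∀ x y z : R × F, homMul l r s (x + y) z = homMul l r s x z + homMul l r s y z) ∧
    (∀ (c : F) (x y : R × F), homMul l r s (c • x) y = c • homMul l r s x y) ∧
    (∀ (c : F) (x y : R × F), homMul l r s x (c • y) = c • homMul l r s x y) := by
  refine ⟨fun ⟨a,ξ⟩ ⟨b,ζ⟩ ⟨c,η⟩ => ?_, fun ⟨a,ξ⟩ ⟨b,ζ⟩ ⟨c,η⟩ => ?_, fun ⟨a,ξ⟩ ⟨b,ζ⟩ ⟨c,η⟩ => ?_,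
    fun k ⟨a,ξ⟩ ⟨b,ζ⟩ => ?_, fun k ⟨a,ξ⟩ ⟨b,ζ⟩ => ?_⟩ <;>
  · simp only [homMul, Prod.mk_add_mk, Prod.smul_mk, Prod.mk.injEq, smul_eq_mul]
    constructor
    · simp only [mul_add, add_mul, hladd, hradd, hlsmul, hrsmul, hbm1, hbm2, hdh, hs, hsq1,
        hsq2, smul_add, smul_smul, mul_smul_comm, smul_mul_assoc, mul_assoc, hbm3]
      module
    · ring
end

section
/- Let (σ,s) be a homothetic datum on an F-algebra R with F a field (or ℤ) and let α_R be an algebra endomorphism of R. Define, for w ∈ R and ς ∈ F, the linear map α_S : R(σ,s) → R(σ,s) by α_S(a + ξ𝛔) = α_R(a) + ξw + ξς𝛔. Then α_S is an algebra endomorphism if and only if ς² = ς (hence ς = 0 or 1 when F is a field) and, for all a ∈ R: (i) α_R(s) − ςs = w² + ς(wσ) + ς(σw) − w; (ii) α_R(aσ) = α_R(a)w + ς(α_R(a)σ); (iii) α_R(σa) = wα_R(a) + ς(σα_R(a)). -/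
/-- the linear map `α_S(a + ξ𝛔) = α_R(a) + ξw + ξς𝛔` on `R(σ,s)` is an
algebra endomorphism if and only if `ς = 0` or `ς = 1` and, for all `a ∈ R`,
(i) `α_R(s) − ςs = w² + ς(wσ) + ς(σw) − w`, (ii) `α_R(aσ) = α_R(a)w + ς(α_R(a)σ)`,
(iii) `α_R(σa) = wα_R(a) + ς(σα_R(a))`. -/
theorem endomorphism_extension_iff
    {F R : Type*} [Field F] [NonUnitalRing R] [Module F R]
    [SMulCommClass F R R] [IsScalarTower F R R]
    (l r : R → R) (s : R)
    (hladd : ∀ a b, l (a + b) = l a + l b)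
    (hlsmul : ∀ (c : F) a, l (c • a) = c • l a)
    (hradd : ∀ a b, r (a + b) = r a + r b)
    (hrsmul : ∀ (c : F) a, r (c • a) = c • r a)
    (hbm1 : ∀ a b, r (a * b) = r a * b)
    (hbm2 : ∀ a b, l (a * b) = a * l b)
    (hbm3 : ∀ a b, a * r b = l a * b)
    (hdh : ∀ a, r (l a) = l (r a))
    (hs : r s = l s)
    (hsq1 : ∀ a, r (r a) = r a + s * a)
    (hsq2 : ∀ a, l (l a) = l a + a * s)
    (αR : R → R)
    (hαadd : ∀ a b, αR (a + b) = αR a + αR b)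
    (hαsmul : ∀ (c : F) a, αR (c • a) = c • αR a)
    (hαmul : ∀ a b, αR (a * b) = αR a * αR b)
    (w : R) (ς : F) :
    (∀ x y : R × F,
        (fun z : R × F => ((αR z.1 + z.2 • w, z.2 * ς) : R × F)) (homMul l r s x y)
          = homMul l r s ((fun z : R × F => ((αR z.1 + z.2 • w, z.2 * ς) : R × F)) x)
              ((fun z : R × F => ((αR z.1 + z.2 • w, z.2 * ς) : R × F)) y))
      ↔ ((ς = 0 ∨ ς = 1) ∧
          (αR s - ς • s = w * w + ς • l w + ς • r w - w) ∧
          (∀ a : R, αR (l a) = αR a * w + ς • l (αR a)) ∧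
          (∀ a : R, αR (r a) = w * αR a + ς • r (αR a))) := by
  have hl0 : l 0 = 0 := by simpa using hlsmul 0 0
  have hr0 : r 0 = 0 := by simpa using hrsmul 0 0
  have hα0 : αR 0 = 0 := by simpa using hαsmul 0 0
  constructor
  · intro h
    have h1 := h (0, 1) (0, 1)
    simp only [homMul, hl0, hr0, hα0, zero_mul, mul_zero, zero_add, add_zero, one_mul, mul_one,
      one_smul, smul_zero, Prod.mk.injEq] at h1
    obtain ⟨h1a, h1b⟩ := h1
    have hsς : ς = 0 ∨ ς = 1 := by
      have : ς * (ς - 1) = 0 := by linear_combination -h1b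
      rcases mul_eq_zero.mp this with h' | h'
      · exact Or.inl h'
      · exact Or.inr (sub_eq_zero.mp h')
    have hς2 : ς * ς = ς := h1b.symm
    rw [hς2] at h1a
    refine ⟨hsς, ?_, ?_, ?_⟩
    · linear_combination (norm := module) h1a
    · intro a
      have h2 := h (a, 0) (0, 1)
      simpa [homMul, hl0, hr0, hα0, Prod.ext_iff] using h2
    · intro a
      have h3 := h (0, 1) (a, 0)
      simpa [homMul, hl0, hr0, hα0, Prod.ext_iff] using h3
  · rintro ⟨hsς, hi, hii, hiii⟩ ⟨a, ξ⟩ ⟨b, ζ⟩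
    simp only [homMul, hαadd, hαmul, hαsmul, Prod.mk.injEq]
    rcases hsς with h | h <;> subst h
    · simp only [zero_smul, one_smul, mul_zero, zero_mul, mul_one, one_mul,
        add_zero, zero_add, sub_zero, smul_zero] at hi hii hiii ⊢
      refine ⟨?_, trivial⟩
      simp only [hladd, hlsmul, hradd, hrsmul, hii, hiii, mul_add, add_mul, smul_mul_assoc, mul_smul_comm, smul_add,
        smul_sub, smul_smul]
      linear_combination (norm := module) (ξ * ζ : F) • hi
    · simp only [zero_smul, one_smul, mul_zero, zero_mul, mul_one, one_mul,
        add_zero, zero_add, sub_zero, smul_zero] at hi hii hiii ⊢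
      refine ⟨?_, trivial⟩
      simp only [hladd, hlsmul, hradd, hrsmul, hii, hiii, mul_add, add_mul, smul_mul_assoc, mul_smul_comm, smul_add,
        smul_sub, smul_smul]
      linear_combination (norm := module) (ξ * ζ : F) • hi
end

section
/- Let (σ,s) be a homothetic datum on an F-algebra R, let α_R be an algebra endomorphism of R and w ∈ R, ς ∈ {0,1} satisfy the conditions making α_S(a+ξ𝛔) = α_R(a)+ξw+ξς𝛔 an algebra endomorphism of R(σ,s). Let δ_R be an α_R-skew derivation of R. For e ∈ R and μ ∈ F, define δ_S : R(σ,s) → R(σ,s) by δ_S(a + ξ𝛔) = δ_R(a) + ξe + ξμ𝛔. Then δ_S is an α_S-skew derivation (i.e. δ_S(uv) = δ_S(u)v + α_S(u)δ_S(v)) if and only if ςμ = 0 and for all a ∈ R: (a) δ_R(s) − μs = eσ + ς(σe) + we + μ(wσ) − e; (b) δ_R(aσ) = δ_R(a)σ + α_R(a)e + μ(α_R(a)σ); (c) δ_R(σa) = wδ_R(a) + ς(σδ_R(a)) + ea + μ(σa). -/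
/-- given `(α_R, w, ς)` making `α_S(a+ξ𝛔)=α_R(a)+ξw+ξς𝛔` an algebra
endomorphism of `R(σ,s)`, the map `δ_S(a + ξ𝛔) = δ_R(a) + ξe + ξμ𝛔` is an
`α_S`-skew derivation if and only if `ςμ = 0` and, for all `a ∈ R`,
(a) `δ_R(s) − μs = eσ + ς(σe) + we + μ(wσ) − e`,
(b) `δ_R(aσ) = δ_R(a)σ + α_R(a)e + μ(α_R(a)σ)`,
(c) `δ_R(σa) = wδ_R(a) + ς(σδ_R(a)) + ea + μ(σa)`. -/
theorem skew_derivation_extension_iff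
    {F R : Type*} [Field F] [NonUnitalRing R] [Module F R]
    [SMulCommClass F R R] [IsScalarTower F R R]
    (l r : R → R) (s : R)
    (hladd : ∀ a b, l (a + b) = l a + l b)
    (hlsmul : ∀ (c : F) a, l (c • a) = c • l a)
    (hradd : ∀ a b, r (a + b) = r a + r b)
    (hrsmul : ∀ (c : F) a, r (c • a) = c • r a)
    (hbm1 : ∀ a b, r (a * b) = r a * b)
    (hbm2 : ∀ a b, l (a * b) = a * l b)
    (hbm3 : ∀ a b, a * r b = l a * b)
    (hdh : ∀ a, r (l a) = l (r a))
    (hs : r s = l s)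
    (hsq1 : ∀ a, r (r a) = r a + s * a)
    (hsq2 : ∀ a, l (l a) = l a + a * s)
    (αR : R → R)
    (hαadd : ∀ a b, αR (a + b) = αR a + αR b)
    (hαsmul : ∀ (c : F) a, αR (c • a) = c • αR a)
    (hαmul : ∀ a b, αR (a * b) = αR a * αR b)
    (w : R) (ς : F)
    (hς : ς = 0 ∨ ς = 1)
    (hi : αR s - ς • s = w * w + ς • l w + ς • r w - w)
    (hii : ∀ a : R, αR (l a) = αR a * w + ς • l (αR a))
    (hiii : ∀ a : R, αR (r a) = w * αR a + ς • r (αR a))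
    (δR : R → R)
    (hδadd : ∀ a b, δR (a + b) = δR a + δR b)
    (hδsmul : ∀ (c : F) a, δR (c • a) = c • δR a)
    (hδ : ∀ a b, δR (a * b) = δR a * b + αR a * δR b)
    (e : R) (μ : F) :
    (∀ x y : R × F,
        (fun z : R × F => ((δR z.1 + z.2 • e, z.2 * μ) : R × F)) (homMul l r s x y)
          = homMul l r s ((fun z : R × F => ((δR z.1 + z.2 • e, z.2 * μ) : R × F)) x) y
            + homMul l r s ((fun z : R × F => ((αR z.1 + z.2 • w, z.2 * ς) : R × F)) x)
                ((fun z : R × F => ((δR z.1 + z.2 • e, z.2 * μ) : R × F)) y))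
      ↔ (ς * μ = 0 ∧
          (δR s - μ • s = l e + ς • r e + w * e + μ • l w - e) ∧
          (∀ a : R, δR (l a) = l (δR a) + αR a * e + μ • l (αR a)) ∧
          (∀ a : R, δR (r a) = w * δR a + ς • r (δR a) + e * a + μ • r a)) := by
  have hδ0 : δR 0 = 0 := by have := hδsmul 0 0; simpa using this
  have hl0 : l 0 = 0 := by have := hlsmul 0 0; simpa using this
  have hr0 : r 0 = 0 := by have := hrsmul 0 0; simpa using this
  have hα0 : αR 0 = 0 := by have := hαsmul 0 0; simpa using this
  constructor
  · intro h
    have h0 : ς * μ = 0 := by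
      have := congrArg Prod.snd (h (0, 1) (0, 1))
      simp [homMul] at this
      rcases this with h1 | h1 <;> simp [h1]
    refine ⟨h0, ?_, ?_, ?_⟩
    · have := congrArg Prod.fst (h (0, 1) (0, 1))
      simp [homMul, hδ0, hl0, hr0, hα0, hδ, hδadd, hδsmul, h0] at this
      linear_combination (norm := module) this
    · intro a
      have := congrArg Prod.fst (h (a, 0) (0, 1))
      simp [homMul, hδ0, hl0, hr0, hα0, hδ, hδadd, hδsmul] at this
      linear_combination (norm := module) this
    · intro a
      have := congrArg Prod.fst (h (0, 1) (a, 0))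
      simp [homMul, hδ0, hl0, hr0, hα0, hδ, hδadd, hδsmul] at this
      linear_combination (norm := module) this
  · rintro ⟨h0, ha, hb, hc⟩
    have ha' : δR s = μ • s + (l e + ς • r e + w * e + μ • l w - e) := by
      linear_combination (norm := module) ha
    rcases hς with rfl | rfl
    · rintro ⟨a, ξ⟩ ⟨b, η⟩
      refine Prod.ext ?_ ?_
      · simp only [homMul, Prod.mk_add_mk, hδadd, hδsmul, hδ, hb, hc, ha',
          hladd, hlsmul, hradd, hrsmul, zero_smul, one_smul, smul_add, smul_sub,
          mul_add, add_mul, smul_mul_assoc, mul_smul_comm, smul_smul,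
          add_zero, zero_add, mul_zero, zero_mul, mul_one, one_mul]
        match_scalars <;> ring
      · simp [homMul]; ring
    · have hμ : μ = 0 := by simpa using h0
      subst hμ
      rintro ⟨a, ξ⟩ ⟨b, η⟩
      refine Prod.ext ?_ ?_
      · simp only [homMul, Prod.mk_add_mk, hδadd, hδsmul, hδ, hb, hc, ha',
          hladd, hlsmul, hradd, hrsmul, zero_smul, one_smul, smul_add, smul_sub,
          mul_add, add_mul, smul_mul_assoc, mul_smul_comm, smul_smul,
          add_zero, zero_add, mul_zero, zero_mul, mul_one, one_mul]
        match_scalars <;> ring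
      · simp [homMul]
end

section
/- Let A be a non-degenerate associative algebra. Then every bimultiplication σ of A is automatically a double homothetism, i.e. σ(aσ) = (σa)σ for all a ∈ A. -/
/-- on a non-degenerate associative algebra, every bimultiplication
`σ = (l, r)` (with `l a = aσ`, `r a = σa`) is automatically a double homothetism:
`σ(aσ) = (σa)σ`, i.e. `r (l a) = l (r a)` for all `a`. -/
theorem bimultiplication_is_double_homothetism_of_nondegenerate
    {A : Type*} [NonUnitalRing A]
    (hnd1 : ∀ a : A, (∀ b : A, a * b = 0) → a = 0)
    (hnd2 : ∀ a : A, (∀ b : A, b * a = 0) → a = 0)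
    (l r : A → A)
    (hbm1 : ∀ a b, r (a * b) = r a * b)
    (hbm2 : ∀ a b, l (a * b) = a * l b)
    (hbm3 : ∀ a b, a * r b = l a * b) :
    ∀ a : A, r (l a) = l (r a) := by
  intro a
  have h : ∀ b : A, (r (l a) - l (r a)) * b = 0 := by
    intro b
    have h1 : r (l a) * b = r a * r b := by
      rw [← hbm1, ← hbm3, hbm1]
    have h2 : l (r a) * b = r a * r b := (hbm3 (r a) b).symm
    rw [sub_mul, h1, h2, sub_self]
  exact sub_eq_zero.mp (hnd1 _ h)
end

section
/- For n ≥ 3 and 2 ≤ k ≤ n−1, left and right multiplication by the matrix unit e_{kk} maps the algebra ℸ_n into itself, and the resulting pair of maps ε_k = (x ↦ x e_{kk}, x ↦ e_{kk} x) is an idempotent bimultiplication (multiplier) of ℸ_n which is not inner, i.e. there is no y ∈ ℸ_n with e_{kk}x = yx and x e_{kk} = xy for all x ∈ ℸ_n. -/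
/-- Membership in the non-unital algebra `ℸ_n ⊂ M_n(F)` of matrices supported on the
first row and the last column. -/
def InDaleth {F : Type*} [Field F] {n : ℕ} (x : Matrix (Fin n) (Fin n) F) : Prop :=
  ∀ i j : Fin n, (i : ℕ) ≠ 0 → (j : ℕ) ≠ n - 1 → x i j = 0

/-- for `n ≥ 3` and `2 ≤ k ≤ n−1` (i.e. `k ≠ 0` and `k ≠ n-1` in
0-indexed terms), left and right multiplication by `e_{kk}` map `ℸ_n` into itself and
yield an idempotent bimultiplication `ε_k` of `ℸ_n` which is not inner. -/
theorem epsilon_k_noninner_idempotent_multiplier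
    {F : Type*} [Field F] (n : ℕ) (hn : 3 ≤ n) (k : Fin n)
    (hk0 : (k : ℕ) ≠ 0) (hk1 : (k : ℕ) ≠ n - 1) :
    (∀ x : Matrix (Fin n) (Fin n) F, InDaleth x →
        InDaleth (x * Matrix.single k k (1 : F)) ∧
        InDaleth (Matrix.single k k (1 : F) * x)) ∧
    (∀ x y : Matrix (Fin n) (Fin n) F, InDaleth x → InDaleth y →
        Matrix.single k k (1 : F) * (x * y)
          = (Matrix.single k k (1 : F) * x) * y ∧
        (x * y) * Matrix.single k k (1 : F)
          = x * (y * Matrix.single k k (1 : F)) ∧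
        x * (Matrix.single k k (1 : F) * y)
          = (x * Matrix.single k k (1 : F)) * y) ∧
    (∀ x : Matrix (Fin n) (Fin n) F, InDaleth x →
        (x * Matrix.single k k (1 : F)) * Matrix.single k k (1 : F)
          = x * Matrix.single k k (1 : F) ∧
        Matrix.single k k (1 : F) * (Matrix.single k k (1 : F) * x)
          = Matrix.single k k (1 : F) * x) ∧
    ¬ ∃ y : Matrix (Fin n) (Fin n) F, InDaleth y ∧
        ∀ x : Matrix (Fin n) (Fin n) F, InDaleth x →
          Matrix.single k k (1 : F) * x = y * x ∧
          x * Matrix.single k k (1 : F) = x * y := by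
  have hE : ∀ i j : Fin n, Matrix.single k k (1 : F) i j
      = if k = i ∧ k = j then 1 else 0 := by
    intro i j; rfl
  refine ⟨?_, ?_, ?_, ?_⟩
  · intro x hx
    constructor
    · intro i j hi hj
      simp only [Matrix.mul_apply, hE]
      rw [Finset.sum_eq_zero]
      intro m _
      by_cases h : k = m ∧ k = j
      · obtain ⟨h1, h2⟩ := h
        subst h1
        rw [hx i k hi hk1]
        simp
      · simp [h]
    · intro i j hi hj
      simp only [Matrix.mul_apply, hE]
      rw [Finset.sum_eq_zero]
      intro m _
      by_cases h : k = i ∧ k = m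
      · rw [hx m j (by rw [← h.2]; exact hk0) hj, mul_zero]
      · simp [h]
  · intro x y _ _
    exact ⟨(mul_assoc _ _ _).symm, mul_assoc _ _ _, (mul_assoc _ _ _).symm⟩
  · intro x _
    have hEE : Matrix.single k k (1 : F) * Matrix.single k k (1 : F)
        = Matrix.single k k (1 : F) := by
      rw [Matrix.single_mul_single_same, one_mul]
    exact ⟨by rw [mul_assoc, hEE], by rw [← mul_assoc, hEE]⟩
  · rintro ⟨y, hy, h⟩
    have hn0 : (0 : ℕ) < n := by omega
    set z0 : Fin n := ⟨0, hn0⟩ with hz0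
    set x : Matrix (Fin n) (Fin n) F := Matrix.single z0 k 1 with hxdef
    have hx : InDaleth x := by
      intro i j hi hj
      rw [hxdef]
      apply Matrix.single_apply_of_row_ne
      intro he
      exact hi (by rw [← he])
    have h2 := (h x hx).2
    have hL : (x * Matrix.single k k (1 : F)) z0 k = 1 := by
      rw [hxdef, Matrix.single_mul_single_same, one_mul]
      exact Matrix.single_apply_same (i := z0) (j := k) (c := (1 : F))
    have hR : (x * y) z0 k = y k k := by
      rw [hxdef]
      simp [Matrix.mul_apply, Matrix.single, Finset.sum_ite_eq]
    have hykk : y k k = 0 := hy k k hk0 hk1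
    rw [h2, hR, hykk] at hL
    exact one_ne_zero hL.symm
end

section
/- For n ≥ 3 and 2 ≤ k ≤ n−1, with ε_k the bimultiplication of ℸ_n given by multiplication by e_{kk}, the pair (ε_k, 0) is a homothetic datum, and the map ℸ_n(ε_k, 0) → M_n(F), x + ξ𝛔 ↦ x + ξ e_{kk}, is an injective algebra homomorphism whose image is the subalgebra ℸ_n ⊕ F e_{kk} of M_n(F). -/
/-- The multiplication of the homothetic extension `ℸ_n(ε_k, 0)`:
`(x + ξ𝛔)(y + ζ𝛔) = xy + ζ(x ε_k) + ξ(ε_k y) + ξζ𝛔` with `s = 0`. -/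
def daleethExtMul {F : Type*} [Field F] {n : ℕ} (E : Matrix (Fin n) (Fin n) F)
    (p q : Matrix (Fin n) (Fin n) F × F) : Matrix (Fin n) (Fin n) F × F :=
  (p.1 * q.1 + q.2 • (p.1 * E) + p.2 • (E * q.1), p.2 * q.2)

section aux
variable {F : Type*} [Field F] {n : ℕ}

lemma daleth_E_sq (k : Fin n) :
    Matrix.single k k (1 : F) * Matrix.single k k (1 : F)
      = Matrix.single k k (1 : F) := by
  rw [Matrix.single_mul_single_same, one_mul]

lemma daleth_mul (hn : 3 ≤ n) {x y : Matrix (Fin n) (Fin n) F}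
    (hx : InDaleth x) (hy : InDaleth y) : InDaleth (x * y) := by
  intro i j hi hj
  rw [Matrix.mul_apply]
  apply Finset.sum_eq_zero
  intro l _
  by_cases hl : (l : ℕ) = n - 1
  · rw [hy l j (by omega) hj, mul_zero]
  · rw [hx i l hi hl, zero_mul]

lemma daleth_mulE (k : Fin n) (hk1 : (k : ℕ) ≠ n - 1) {x : Matrix (Fin n) (Fin n) F}
    (hx : InDaleth x) : InDaleth (x * Matrix.single k k (1 : F)) := by
  intro i j hi hj
  rw [Matrix.mul_apply]
  apply Finset.sum_eq_zero
  intro l _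
  by_cases hl : l = k
  · subst hl
    rw [hx i l hi hk1, zero_mul]
  · simp [Matrix.single, Ne.symm hl]

lemma daleth_Emul (k : Fin n) (hk0 : (k : ℕ) ≠ 0) {x : Matrix (Fin n) (Fin n) F}
    (hx : InDaleth x) : InDaleth (Matrix.single k k (1 : F) * x) := by
  intro i j hi hj
  rw [Matrix.mul_apply]
  apply Finset.sum_eq_zero
  intro l _
  by_cases hl : l = k
  · subst hl
    rw [hx l j hk0 hj, mul_zero]
  · simp [Matrix.single, Ne.symm hl]

lemma daleth_add {x y : Matrix (Fin n) (Fin n) F}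
    (hx : InDaleth x) (hy : InDaleth y) : InDaleth (x + y) := by
  intro i j hi hj
  simp [Matrix.add_apply, hx i j hi hj, hy i j hi hj]

lemma daleth_smul (c : F) {x : Matrix (Fin n) (Fin n) F}
    (hx : InDaleth x) : InDaleth (c • x) := by
  intro i j hi hj
  simp [Matrix.smul_apply, hx i j hi hj]

end aux

/-- `(ε_k, 0)` is a homothetic datum on `ℸ_n`, and
`x + ξ𝛔 ↦ x + ξ e_{kk}` is an injective algebra homomorphism
`ℸ_n(ε_k, 0) → M_n(F)` with image the subalgebra `ℸ_n ⊕ F e_{kk}`. -/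
theorem daleth_homothetic_extension_embeds
    {F : Type*} [Field F] (n : ℕ) (hn : 3 ≤ n) (k : Fin n)
    (hk0 : (k : ℕ) ≠ 0) (hk1 : (k : ℕ) ≠ n - 1) :
    -- `(ε_k, 0)` is a homothetic datum: double homothetism and `ε_k² = ε_k`
    (∀ x : Matrix (Fin n) (Fin n) F, InDaleth x →
        Matrix.single k k (1 : F) * (x * Matrix.single k k (1 : F))
          = (Matrix.single k k (1 : F) * x) * Matrix.single k k (1 : F) ∧
        (x * Matrix.single k k (1 : F)) * Matrix.single k k (1 : F)
          = x * Matrix.single k k (1 : F) ∧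
        Matrix.single k k (1 : F) * (Matrix.single k k (1 : F) * x)
          = Matrix.single k k (1 : F) * x) ∧
    -- the map `φ(x,ξ) = x + ξ e_{kk}` is additive and multiplicative on `ℸ_n(ε_k,0)`
    (∀ p q : Matrix (Fin n) (Fin n) F × F,
        (p + q).1 + (p + q).2 • Matrix.single k k (1 : F)
          = (p.1 + p.2 • Matrix.single k k (1 : F))
            + (q.1 + q.2 • Matrix.single k k (1 : F))) ∧
    (∀ p q : Matrix (Fin n) (Fin n) F × F, InDaleth p.1 → InDaleth q.1 →
        (daleethExtMul (Matrix.single k k (1 : F)) p q).1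
            + (daleethExtMul (Matrix.single k k (1 : F)) p q).2
              • Matrix.single k k (1 : F)
          = (p.1 + p.2 • Matrix.single k k (1 : F))
            * (q.1 + q.2 • Matrix.single k k (1 : F))) ∧
    -- injectivity on `ℸ_n(ε_k,0)`
    (∀ p q : Matrix (Fin n) (Fin n) F × F, InDaleth p.1 → InDaleth q.1 →
        p.1 + p.2 • Matrix.single k k (1 : F)
          = q.1 + q.2 • Matrix.single k k (1 : F) → p = q) ∧
    -- the image is the subalgebra `ℸ_n ⊕ F e_{kk}`, closed under multiplication
    (∀ m : Matrix (Fin n) (Fin n) F,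
        (∃ p : Matrix (Fin n) (Fin n) F × F, InDaleth p.1 ∧
            p.1 + p.2 • Matrix.single k k (1 : F) = m)
          ↔ ∃ (x : Matrix (Fin n) (Fin n) F) (ξ : F), InDaleth x ∧ m = x + ξ • Matrix.single k k (1 : F)) ∧
    (∀ m₁ m₂ : Matrix (Fin n) (Fin n) F,
        (∃ (x : Matrix (Fin n) (Fin n) F) (ξ : F), InDaleth x ∧ m₁ = x + ξ • Matrix.single k k (1 : F)) →
        (∃ (x : Matrix (Fin n) (Fin n) F) (ξ : F), InDaleth x ∧ m₂ = x + ξ • Matrix.single k k (1 : F)) →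
        ∃ (x : Matrix (Fin n) (Fin n) F) (ξ : F), InDaleth x ∧ m₁ * m₂ = x + ξ • Matrix.single k k (1 : F)) := by
  have hEE : Matrix.single k k (1 : F) * Matrix.single k k (1 : F)
      = Matrix.single k k (1 : F) := daleth_E_sq k
  refine ⟨?_, ?_, ?_, ?_, ?_, ?_⟩
  · intro x _
    refine ⟨(mul_assoc _ _ _).symm, ?_, ?_⟩
    · rw [mul_assoc, hEE]
    · rw [← mul_assoc, hEE]
  · intro p q
    simp only [Prod.fst_add, Prod.snd_add, add_smul]
    abel
  · intro p q _ _
    simp only [daleethExtMul, mul_add, add_mul, Matrix.smul_mul, Matrix.mul_smul,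
      smul_smul, hEE]
    rw [mul_comm q.2 p.2]
    abel
  · intro p q hp hq h
    have hkk := congrFun (congrFun h k) k
    simp only [Matrix.add_apply, Matrix.smul_apply, Matrix.single_apply_same,
      smul_eq_mul, mul_one, hp k k hk0 hk1, hq k k hk0 hk1, zero_add] at hkk
    have h1' : p.1 = q.1 := by
      rw [hkk] at h
      exact add_right_cancel h
    exact Prod.ext h1' hkk
  · intro m
    constructor
    · rintro ⟨p, hp, rfl⟩
      exact ⟨p.1, p.2, hp, rfl⟩
    · rintro ⟨x, ξ, hx, rfl⟩
      exact ⟨(x, ξ), hx, rfl⟩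
  · rintro m₁ m₂ ⟨x, ξ, hx, rfl⟩ ⟨y, ζ, hy, rfl⟩
    refine ⟨x * y + ζ • (x * Matrix.single k k (1 : F))
        + ξ • (Matrix.single k k (1 : F) * y), ξ * ζ, ?_, ?_⟩
    · exact daleth_add (daleth_add (daleth_mul hn hx hy)
        (daleth_smul ζ (daleth_mulE k hk1 hx))) (daleth_smul ξ (daleth_Emul k hk0 hy))
    · simp only [mul_add, add_mul, Matrix.smul_mul, Matrix.mul_smul, smul_smul, hEE]
      rw [mul_comm ζ ξ]
      abel
end

section
/- Let (σ,s) be a homothetic datum on R and (α_R, w; δ_R, e) a compatible skew derivation of type 1 (i.e. ς = 1, μ = 0), with extensions α_S, δ_S to S = R(σ,s) given by α_S(a+ξ𝛔) = α_R(a)+ξw+ξ𝛔 and δ_S(a+ξ𝛔) = δ_R(a)+ξe. Then the maps ι' : R[x;α_R,δ_R] → R(σ,s)[x;α_S,δ_S], a x^n ↦ a x^n, and π' : R(σ,s)[x;α_S,δ_S] → F[x], (a+ζ𝛔)x^n ↦ ζ x^n, are algebra homomorphisms, ι' is injective, π' is surjective, and ker π' = im ι'; i.e. 0 → R[x;α_R,δ_R]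 → R(σ,s)[x;α_S,δ_S] → F[x] → 0 is a short exact sequence of algebras. -/
/-- `Γ[α,δ]^m_i`: the sum of all composites of `i` copies of `α` and `m − i` copies
of `δ`. -/
def gam {S : Type*} [AddCommMonoid S] (α δ : S → S) : ℕ → ℕ → S → S
  | 0, 0 => id
  | 0, _ + 1 => fun _ => 0
  | m + 1, 0 => fun a => δ (gam α δ m 0 a)
  | m + 1, i + 1 => fun a => α (gam α δ m i a) + δ (gam α δ m (i + 1) a)

/-- The Ore extension multiplication on `ℕ →₀ S`, for a multiplication `mul` on `S`. -/
noncomputable def oreMul {S : Type*} [AddCommMonoid S] (mul : S → S → S) (α δ : S → S)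
    (p q : ℕ →₀ S) : ℕ →₀ S :=
  p.sum fun m a => q.sum fun n b =>
    (Finset.range (m + 1)).sum fun i => Finsupp.single (n + i) (mul a (gam α δ m i b))

/-- The inclusion `ι' : R[x;α_R,δ_R] → R(σ,s)[x;α_S,δ_S]`, `a x^n ↦ a x^n`. -/
noncomputable def oreIota {F R : Type*} [CommRing F] [NonUnitalRing R]
    (p : ℕ →₀ R) : ℕ →₀ (R × F) :=
  Finsupp.mapRange (fun a : R => ((a, (0 : F)) : R × F)) rfl p

/-- The projection `π' : R(σ,s)[x;α_S,δ_S] → F[x]`, `(a + ζ𝛔)x^n ↦ ζ x^n`. -/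
noncomputable def orePi {F R : Type*} [CommRing F] [NonUnitalRing R]
    (p : ℕ →₀ (R × F)) : Polynomial F :=
  p.sum fun n c => Polynomial.monomial n c.2


section OreAux

variable {F R : Type*} [CommRing F] [NonUnitalRing R]

lemma gam_zero {S : Type*} [AddCommMonoid S] (α δ : S → S) (hα : α 0 = 0) (hδ : δ 0 = 0) :
    ∀ m i, gam α δ m i 0 = 0 := by
  intro m
  induction m with
  | zero => intro i; cases i <;> simp [gam]
  | succ m ih => intro i; cases i <;> simp [gam, ih, hα, hδ]

lemma gam_inl [Module F R] (αR δR : R → R) (w e : R) :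
    ∀ m i (b : R),
      gam (fun z : R × F => (αR z.1 + z.2 • w, z.2))
          (fun z : R × F => (δR z.1 + z.2 • e, 0)) m i ((b, 0) : R × F)
        = ((gam αR δR m i b, 0) : R × F) := by
  intro m
  induction m with
  | zero =>
      intro i b
      cases i <;> simp [gam, Prod.ext_iff]
  | succ m ih =>
      intro i b
      cases i <;> simp [gam, ih, Prod.ext_iff]

lemma gam_snd [Module F R] (αR δR : R → R) (w e : R) :
    ∀ m i (z : R × F),
      (gam (fun z : R × F => (αR z.1 + z.2 • w, z.2))
          (fun z : R × F => (δR z.1 + z.2 • e, 0)) m i z).2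
        = if i = m then z.2 else 0 := by
  intro m
  induction m with
  | zero => intro i z; cases i <;> simp [gam]
  | succ m ih => intro i z; cases i <;> simp [gam, ih]

end OreAux

/-- for a homothetic datum `(σ,s)` on `R` and a compatible skew
derivation `(α_R, w; δ_R, e)` of type 1 (`ς = 1`, `μ = 0`), with extension
`α_S(a+ξ𝛔) = α_R(a)+ξw+ξ𝛔`, `δ_S(a+ξ𝛔) = δ_R(a)+ξe`, the maps `ι'` and `π'`
form a short exact sequence of algebras
`0 → R[x;α_R,δ_R] → R(σ,s)[x;α_S,δ_S] → F[x] → 0`. -/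
theorem ore_homothetic_exact_sequence
    {F R : Type*} [CommRing F] [NonUnitalRing R] [Module F R]
    [SMulCommClass F R R] [IsScalarTower F R R]
    (l r : R → R) (s : R)
    (hladd : ∀ a b, l (a + b) = l a + l b)
    (hlsmul : ∀ (c : F) a, l (c • a) = c • l a)
    (hradd : ∀ a b, r (a + b) = r a + r b)
    (hrsmul : ∀ (c : F) a, r (c • a) = c • r a)
    (hbm1 : ∀ a b, r (a * b) = r a * b)
    (hbm2 : ∀ a b, l (a * b) = a * l b)
    (hbm3 : ∀ a b, a * r b = l a * b)
    (hdh : ∀ a, r (l a) = l (r a))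
    (hs : r s = l s)
    (hsq1 : ∀ a, r (r a) = r a + s * a)
    (hsq2 : ∀ a, l (l a) = l a + a * s)
    (αR δR : R → R) (w e : R)
    (hαadd : ∀ a b, αR (a + b) = αR a + αR b)
    (hαsmul : ∀ (c : F) a, αR (c • a) = c • αR a)
    (hαmul : ∀ a b, αR (a * b) = αR a * αR b)
    (hδadd : ∀ a b, δR (a + b) = δR a + δR b)
    (hδsmul : ∀ (c : F) a, δR (c • a) = c • δR a)
    (hδ : ∀ a b, δR (a * b) = δR a * b + αR a * δR b)
    (hi : αR s - s = w * w + l w + r w - w)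
    (hii : ∀ a, αR (l a) = l (αR a) + αR a * w)
    (hiii : ∀ a, αR (r a) = r (αR a) + w * αR a)
    (ha : δR s = l e + r e + w * e - e)
    (hb : ∀ a, δR (l a) = l (δR a) + αR a * e)
    (hc : ∀ a, δR (r a) = w * δR a + r (δR a) + e * a) :
    -- `ι'` is an injective algebra homomorphism
    (∀ p q : ℕ →₀ R, oreIota (F := F) (p + q) = oreIota p + oreIota q) ∧
    (∀ p q : ℕ →₀ R,
        oreIota (F := F) (oreMul (· * ·) αR δR p q)
          = oreMul (homMul l r s)
              (fun z : R × F => (αR z.1 + z.2 • w, z.2))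
              (fun z : R × F => (δR z.1 + z.2 • e, 0))
              (oreIota p) (oreIota q)) ∧
    Function.Injective (oreIota (F := F) (R := R)) ∧
    -- `π'` is a surjective algebra homomorphism
    (∀ p q : ℕ →₀ (R × F), orePi (p + q) = orePi p + orePi q) ∧
    (∀ p q : ℕ →₀ (R × F),
        orePi (oreMul (homMul l r s)
            (fun z : R × F => (αR z.1 + z.2 • w, z.2))
            (fun z : R × F => (δR z.1 + z.2 • e, 0)) p q)
          = orePi p * orePi q) ∧
    Function.Surjective (orePi (F := F) (R := R)) ∧
    -- exactness: `ker π' = im ι'`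
    (∀ p : ℕ →₀ (R × F), orePi p = 0 ↔ ∃ q : ℕ →₀ R, oreIota q = p) := by
  classical
  -- basic zero facts
  have hl0 : l 0 = 0 := by simpa using hlsmul 0 0
  have hα0 : αR 0 = 0 := by simpa using hαsmul 0 0
  have hδ0 : δR 0 = 0 := by simpa using hδsmul 0 0
  have hι0 : oreIota (F := F) (R := R) 0 = 0 := by
    refine Finsupp.ext fun n => ?_
    simp [oreIota, Finsupp.mapRange_apply, Prod.ext_iff]
  have hιadd : ∀ p q : ℕ →₀ R, oreIota (F := F) (p + q) = oreIota p + oreIota q := by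
    intro p q
    exact Finsupp.mapRange_add (by intro x y; simp) p q
  have hπ0 : orePi (F := F) (R := R) 0 = 0 := by simp [orePi]
  have hπadd : ∀ p q : ℕ →₀ (R × F), orePi (p + q) = orePi p + orePi q := by
    intro p q
    exact Finsupp.sum_add_index' (fun n => by simp) (fun n b₁ b₂ => by simp)
  let Φ : (ℕ →₀ R) →+ (ℕ →₀ (R × F)) :=
    { toFun := oreIota, map_zero' := hι0, map_add' := hιadd }
  let Ψ : (ℕ →₀ (R × F)) →+ Polynomial F :=
    { toFun := orePi, map_zero' := hπ0, map_add' := hπadd }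
  have hΦs : ∀ (k : ℕ) (v : R), Φ (Finsupp.single k v) = Finsupp.single k ((v, 0) : R × F) := by
    intro k v
    show Finsupp.mapRange _ rfl _ = _
    rw [Finsupp.mapRange_single]
  have hΨs : ∀ (k : ℕ) (v : R × F), Ψ (Finsupp.single k v) = Polynomial.monomial k v.2 := by
    intro k v
    show orePi _ = _
    unfold orePi
    rw [Finsupp.sum_single_index (by simp)]
  have hgz : ∀ m i, gam (fun z : R × F => (αR z.1 + z.2 • w, z.2))
      (fun z : R × F => (δR z.1 + z.2 • e, 0)) m i 0 = 0 :=
    gam_zero _ _ (by simp [hα0, Prod.ext_iff]) (by simp [hδ0, Prod.ext_iff])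
  have hcoeff : ∀ (p : ℕ →₀ (R × F)) (k : ℕ), (orePi p).coeff k = (p k).2 := by
    intro p k
    unfold orePi
    rw [Finsupp.sum, Polynomial.finset_sum_coeff]
    simp_rw [Polynomial.coeff_monomial]
    rw [Finset.sum_ite_eq' p.support k]
    by_cases h : k ∈ p.support
    · simp [h]
    · simp [h, Finsupp.notMem_support_iff.mp h]
  refine ⟨hιadd, ?_, ?_, hπadd, ?_, ?_, ?_⟩
  · -- ι' multiplicative
    intro p q
    trans (p.sum fun m a => q.sum fun n b => (Finset.range (m + 1)).sum fun i =>
        Finsupp.single (n + i) (((a * gam αR δR m i b, 0) : R × F)))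
    · show Φ (oreMul (· * ·) αR δR p q) = _
      unfold oreMul
      rw [map_finsuppSum]
      refine Finsupp.sum_congr fun m _ => ?_
      rw [map_finsuppSum]
      refine Finsupp.sum_congr fun n _ => ?_
      rw [map_sum]
      exact Finset.sum_congr rfl fun i _ => hΦs _ _
    · symm
      unfold oreMul oreIota
      rw [Finsupp.sum_mapRange_index ?hout]
      case hout =>
        intro m
        simp [homMul, hl0, Prod.mk_zero_zero]
      refine Finsupp.sum_congr fun m _ => ?_
      rw [Finsupp.sum_mapRange_index ?hin]
      case hin =>
        intro n
        simp [homMul, hgz, Prod.mk_zero_zero]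
      refine Finsupp.sum_congr fun n _ => ?_
      refine Finset.sum_congr rfl fun i _ => ?_
      simp [gam_inl, homMul]
  · -- ι' injective
    intro p q h
    ext n
    have := DFunLike.congr_fun h n
    simpa [oreIota, Finsupp.mapRange_apply, Prod.ext_iff] using this
  · -- π' multiplicative
    intro p q
    trans (p.sum fun m a => q.sum fun n b => Polynomial.monomial (n + m) (a.2 * b.2))
    · show Ψ (oreMul _ _ _ p q) = _
      unfold oreMul
      rw [map_finsuppSum]
      refine Finsupp.sum_congr fun m _ => ?_
      rw [map_finsuppSum]
      refine Finsupp.sum_congr fun n _ => ?_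
      rw [map_sum]
      have step : ∀ i ∈ Finset.range (m + 1),
          Ψ (Finsupp.single (n + i)
              (homMul l r s (p m)
                (gam (fun z : R × F => (αR z.1 + z.2 • w, z.2))
                  (fun z : R × F => (δR z.1 + z.2 • e, 0)) m i (q n))))
            = if i = m then Polynomial.monomial (n + m) ((p m).2 * (q n).2) else 0 := by
        intro i _
        rw [hΨs]
        by_cases h : i = m
        · subst h; simp [homMul, gam_snd]
        · simp [homMul, gam_snd, h]
      rw [Finset.sum_congr rfl step, Finset.sum_ite_eq' (Finset.range (m + 1)) m]
      simp
    · symm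
      unfold orePi
      rw [Finsupp.sum_mul]
      refine Finsupp.sum_congr fun m _ => ?_
      rw [Finsupp.mul_sum]
      refine Finsupp.sum_congr fun n _ => ?_
      rw [Polynomial.monomial_mul_monomial, add_comm m n]
  · -- π' surjective
    intro f
    refine ⟨Finsupp.mapRange (fun c : F => (((0 : R), c) : R × F)) rfl f.toFinsupp.coeff, ?_⟩
    apply Polynomial.ext
    intro k
    rw [hcoeff]
    simp only [Finsupp.mapRange_apply]
    rfl
  · -- exactness
    intro p
    constructor
    · intro h
      refine ⟨Finsupp.mapRange Prod.fst rfl p, ?_⟩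
      refine Finsupp.ext fun n => ?_
      have h2 : (p n).2 = 0 := by
        rw [← hcoeff p n, h]; simp
      simp only [oreIota, Finsupp.mapRange_apply]
      exact Prod.ext_iff.mpr ⟨rfl, h2.symm⟩
    · rintro ⟨q, rfl⟩
      apply Polynomial.ext
      intro k
      rw [hcoeff]
      simp [oreIota, Finsupp.mapRange_apply]
end
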